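/- Uniqueness of the Gaussian summation rule: for N distinct nodes x_0,…,x_{N−1} and n with 2n ≤ N, there is at most one choice of n distinct nodes s_1,…,s_n and weights w_1,…,w_n such that Σ_{k=1}^n w_k p(s_k) = (2/N) Σ_{j=0}^{N−1} p(x_j) for all polynomials p of degree ≤ 2n−1. -/
import Mathlib

open Polynomial Finset

/-- Orthogonality of the node polynomial against lower-degree polynomials. -/
lemma gauss_node_poly_orth
    (N n : ℕ) (hn : 1 ≤ n) (h2n : 2 * n ≤ N)
    (x : Fin N → ℝ) (s : Fin n → ℝ) (w : Fin n → ℝ)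
    (hexact : ∀ p : Polynomial ℝ, p.natDegree ≤ 2 * n - 1 →
      ∑ k, w k * p.eval (s k) = (2 / N) * ∑ j, p.eval (x j))
    (q : Polynomial ℝ) (hq : q.natDegree ≤ n - 1) :
    ∑ j, (∏ k, (X - C (s k))).eval (x j) * q.eval (x j) = 0 := by
  classical
  set π : Polynomial ℝ := ∏ k, (X - C (s k)) with hπ
  have hπdeg : π.natDegree = n := by
    rw [hπ, natDegree_prod]
    · simp
    · intro i _; exact X_sub_C_ne_zero _
  have hmul : (π * q).natDegree ≤ 2 * n - 1 := by
    calc (π * q).natDegree ≤ π.natDegree + q.natDegree := natDegree_mul_le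
    _ ≤ n + (n - 1) := by omega
    _ ≤ 2 * n - 1 := by omega
  have h := hexact (π * q) hmul
  have hzero : ∀ k : Fin n, π.eval (s k) = 0 := by
    intro k
    rw [hπ, eval_prod]
    exact Finset.prod_eq_zero (mem_univ k) (by simp)
  have hLHS : ∑ k, w k * (π * q).eval (s k) = 0 := by
    apply Finset.sum_eq_zero
    intro k _
    rw [eval_mul, hzero k, zero_mul, mul_zero]
  rw [hLHS] at h
  have hN : (0 : ℝ) < N := by
    have : 0 < N := by omega
    exact_mod_cast this
  have h2N : (2 / (N:ℝ)) ≠ 0 := by positivity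
  have := (mul_eq_zero.mp h.symm).resolve_left h2N
  simpa [eval_mul] using this

theorem gauss_summation_rule_unique
    (N n : ℕ) (hn : 1 ≤ n) (h2n : 2 * n ≤ N)
    (x : Fin N → ℝ) (hx : Function.Injective x)
    (s s' : Fin n → ℝ) (hs : Function.Injective s) (hs' : Function.Injective s')
    (w w' : Fin n → ℝ)
    (hexact : ∀ p : Polynomial ℝ, p.natDegree ≤ 2 * n - 1 →
      ∑ k, w k * p.eval (s k) = (2 / N) * ∑ j, p.eval (x j))
    (hexact' : ∀ p : Polynomial ℝ, p.natDegree ≤ 2 * n - 1 →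
      ∑ k, w' k * p.eval (s' k) = (2 / N) * ∑ j, p.eval (x j)) :
    ∃ σ : Equiv.Perm (Fin n), ∀ k, s' (σ k) = s k ∧ w' (σ k) = w k := by
  classical
  set π : Polynomial ℝ := ∏ k, (X - C (s k)) with hπ
  set π' : Polynomial ℝ := ∏ k, (X - C (s' k)) with hπ'
  have hmonic : π.Monic := monic_prod_of_monic _ _ fun _ _ => monic_X_sub_C _
  have hmonic' : π'.Monic := monic_prod_of_monic _ _ fun _ _ => monic_X_sub_C _
  have hπdeg : π.natDegree = n := by
    rw [hπ, natDegree_prod]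
    · simp
    · intro i _; exact X_sub_C_ne_zero _
  have hπ'deg : π'.natDegree = n := by
    rw [hπ', natDegree_prod]
    · simp
    · intro i _; exact X_sub_C_ne_zero _
  -- the difference has low degree
  set d : Polynomial ℝ := π - π' with hd
  have hddeg : d.natDegree ≤ n - 1 := by
    rcases eq_or_ne d 0 with h0 | h0
    · rw [h0]; simp
    · have : d.degree < π.degree := by
        apply degree_sub_lt
        · rw [Polynomial.degree_eq_natDegree hmonic.ne_zero, Polynomial.degree_eq_natDegree hmonic'.ne_zero, hπdeg, hπ'deg]
        · exact hmonic.ne_zero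
        · rw [hmonic.leadingCoeff, hmonic'.leadingCoeff]
      have := natDegree_lt_natDegree h0 this
      omega
  have key := gauss_node_poly_orth N n hn h2n x s w hexact d hddeg
  have key' := gauss_node_poly_orth N n hn h2n x s' w' hexact' d hddeg
  have hsum : ∑ j, d.eval (x j) * d.eval (x j) = 0 := by
    have : ∀ j, d.eval (x j) * d.eval (x j)
        = π.eval (x j) * d.eval (x j) - π'.eval (x j) * d.eval (x j) := by
      intro j; rw [hd]; ring_nf; simp [eval_sub]; ring
    simp_rw [this]
    rw [Finset.sum_sub_distrib, key, key', sub_zero]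
  have heval0 : ∀ j, d.eval (x j) = 0 := by
    intro j
    have h1 : ∀ j ∈ (univ : Finset (Fin N)), 0 ≤ d.eval (x j) * d.eval (x j) :=
      fun j _ => mul_self_nonneg _
    have := (Finset.sum_eq_zero_iff_of_nonneg h1).mp hsum j (mem_univ j)
    exact mul_self_eq_zero.mp this
  have hd0 : d = 0 := by
    apply Polynomial.eq_zero_of_natDegree_lt_card_of_eval_eq_zero d hx heval0
    simp only [Fintype.card_fin]
    omega
  have hππ' : π = π' := by rwa [hd, sub_eq_zero] at hd0
  -- equality of root multisets
  have hroots : Multiset.map s univ.val = Multiset.map s' univ.val := by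
    have e1 : π = (Multiset.map (fun a => X - C a) (Multiset.map s univ.val)).prod := by
      rw [hπ, Finset.prod, Multiset.map_map]; rfl
    have e2 : π' = (Multiset.map (fun a => X - C a) (Multiset.map s' univ.val)).prod := by
      rw [hπ', Finset.prod, Multiset.map_map]; rfl
    have := congrArg Polynomial.roots (e1 ▸ e2 ▸ hππ')
    rwa [roots_multiset_prod_X_sub_C, roots_multiset_prod_X_sub_C] at this
  have hmem : ∀ k : Fin n, ∃ j : Fin n, s' j = s k := by
    intro k
    have : s k ∈ Multiset.map s' univ.val := by
      rw [← hroots]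
      exact Multiset.mem_map_of_mem s (mem_univ k)
    obtain ⟨j, _, hj⟩ := Multiset.mem_map.mp this
    exact ⟨j, hj⟩
  choose f hf using hmem
  have hfinj : Function.Injective f := by
    intro a b hab
    apply hs
    rw [← hf a, ← hf b, hab]
  let σ : Equiv.Perm (Fin n) := Equiv.ofBijective f (Finite.injective_iff_bijective.mp hfinj)
  refine ⟨σ, fun k => ⟨hf k, ?_⟩⟩
  -- weights via Lagrange basis
  set ℓ : Polynomial ℝ := Lagrange.basis univ s k with hℓ
  have hℓdeg : ℓ.natDegree ≤ 2 * n - 1 := by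
    rw [hℓ, Lagrange.natDegree_basis hs.injOn (mem_univ k)]
    simp only [card_univ, Fintype.card_fin]
    omega
  have h1 := hexact ℓ hℓdeg
  have h2 := hexact' ℓ hℓdeg
  have hev : ∀ i : Fin n, ℓ.eval (s i) = if i = k then 1 else 0 := by
    intro i
    rcases eq_or_ne i k with rfl | hik
    · simp [hℓ, Lagrange.eval_basis_self hs.injOn (mem_univ i)]
    · simp [hℓ, hik, Lagrange.eval_basis_of_ne (Ne.symm hik) (mem_univ i)]
  have hwk : ∑ i, w i * ℓ.eval (s i) = w k := by
    rw [Finset.sum_eq_single k]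
    · rw [hev k]; simp
    · intro b _ hbk; rw [hev b]; simp [hbk]
    · intro h; exact absurd (mem_univ k) h
  have hw'k : ∑ i, w' i * ℓ.eval (s' i) = w' (σ k) := by
    rw [← Equiv.sum_comp σ (fun i => w' i * ℓ.eval (s' i))]
    have : ∀ i : Fin n, w' (σ i) * ℓ.eval (s' (σ i)) = w' (σ i) * ℓ.eval (s i) := by
      intro i
      have : s' (σ i) = s i := hf i
      rw [this]
    simp_rw [this]
    rw [Finset.sum_eq_single k]
    · rw [hev k]; simp
    · intro b _ hbk; rw [hev b]; simp [hbk]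
    · intro h; exact absurd (mem_univ k) h
  rw [hwk] at h1
  rw [hw'k] at h2
  rw [h1, h2]
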